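/- Let E be the category whose objects are the natural numbers q ≥ 1, and whose morphisms from q to q' are the monotone maps h : Fin (q+1) → Fin (q'+1) satisfying h 0 = 0 and h (Fin.last q) = Fin.last q', with composition given by composition of maps. Let J : SimplexCategory ⥤ E be the functor sending [p] to p + 2 and sending a monotone map g : Fin (p+1) → Fin (p'+1) to its extension ĝ : Fin (p+3) → Fin (p'+3) defined by ĝ 0 = 0, ĝ (Fin.last (p+2)) = Fin.last (p'+2), and ĝ (i+1) = g i + 1 for i : Fin (p+1) (i.e. adjoining a new minimum and a new maximum). Then J is an initial functor: for every object σ of E, the comma category J ↓ σ (of objects of SimplexCategory equipped with a morphism J [p] → σ in E) has contractible classifying space; equivalently, restriction along J preserves all limits of E-indexed diagrams. -/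

import Mathlib

open CategoryTheory

/-- The category `E`: objects are natural numbers `q ≥ 1`; morphisms `q → q'` are monotone
maps `Fin (q+1) → Fin (q'+1)` preserving the minimum and the maximum. -/
def EE : Type := { q : ℕ // 1 ≤ q }

instance : Category EE where
  Hom q q' := { h : Fin (q.1 + 1) → Fin (q'.1 + 1) //
    Monotone h ∧ h 0 = 0 ∧ h (Fin.last q.1) = Fin.last q'.1 }
  id q := ⟨id, monotone_id, rfl, rfl⟩
  comp {a b c} f g := ⟨g.1 ∘ f.1, g.2.1.comp f.2.1,
    by show g.1 (f.1 0) = 0; rw [f.2.2.1, g.2.2.1],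
    by show g.1 (f.1 (Fin.last a.1)) = Fin.last c.1; rw [f.2.2.2, g.2.2.2]⟩
  id_comp f := Subtype.ext rfl
  comp_id f := Subtype.ext rfl
  assoc f g h := Subtype.ext rfl

/-- The extension `ĝ : Fin (p+3) → Fin (p'+3)` of `g : Fin (p+1) → Fin (p'+1)`, obtained by
adjoining a new minimum and a new maximum:  `ĝ 0 = 0`, `ĝ (last) = last`, and
`ĝ (i+1) = g i + 1`. -/
def hatFun {p p' : ℕ} (g : Fin (p + 1) → Fin (p' + 1)) (i : Fin (p + 3)) : Fin (p' + 3) :=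
  if h0 : i.1 = 0 then 0
  else if hl : i.1 = p + 2 then Fin.last (p' + 2)
  else ((g ⟨i.1 - 1, by have := i.isLt; omega⟩).succ.castSucc)

theorem hatFun_zero {p p' : ℕ} (g : Fin (p + 1) → Fin (p' + 1)) : hatFun g 0 = 0 := by
  unfold hatFun
  rw [dif_pos (Fin.val_zero _)]

theorem hatFun_last {p p' : ℕ} (g : Fin (p + 1) → Fin (p' + 1)) :
    hatFun g (Fin.last (p + 2)) = Fin.last (p' + 2) := by
  unfold hatFun
  rw [dif_neg (by simp only [Fin.val_last]; omega), dif_pos (Fin.val_last _)]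

theorem hatFun_mid {p p' : ℕ} (g : Fin (p + 1) → Fin (p' + 1)) (i : Fin (p + 3))
    (h0 : ¬ i.1 = 0) (hl : ¬ i.1 = p + 2) (c : Fin (p + 1)) (hc : c.1 = i.1 - 1) :
    hatFun g i = (g c).succ.castSucc := by
  have hlt : i.1 - 1 < p + 1 := by have := i.isLt; omega
  have hcc : c = ⟨i.1 - 1, hlt⟩ := Fin.ext (by rw [hc])
  subst hcc
  unfold hatFun
  rw [dif_neg h0, dif_neg hl]

theorem hatFun_mono {p p' : ℕ} {g : Fin (p + 1) → Fin (p' + 1)} (hg : Monotone g) :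
    Monotone (hatFun g) := by
  intro i j hij
  have hij' : i.1 ≤ j.1 := hij
  have hi := i.isLt
  have hj := j.isLt
  unfold hatFun
  split_ifs <;>
    first
      | exact Fin.zero_le _
      | exact le_refl _
      | exact Fin.le_last _
      | (exfalso; omega)
      | exact Fin.castSucc_le_castSucc_iff.mpr (Fin.succ_le_succ_iff.mpr
          (hg (Fin.mk_le_mk.mpr (by omega))))

theorem hatFun_id (p : ℕ) :
    hatFun (fun i : Fin (p + 1) => i) = fun i : Fin (p + 3) => i := by
  funext i
  by_cases h1 : i.1 = 0
  · rw [show i = 0 from Fin.ext (by simp [h1]), hatFun_zero]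
  · by_cases h2 : i.1 = p + 2
    · rw [show i = Fin.last (p + 2) from Fin.ext (by simp [h2]), hatFun_last]
    · rw [hatFun_mid (fun i => i) i h1 h2 ⟨i.1 - 1, by have := i.isLt; omega⟩ rfl]
      exact Fin.ext (show i.1 - 1 + 1 = i.1 by omega)

theorem hatFun_comp {p p' p'' : ℕ} (g : Fin (p + 1) → Fin (p' + 1))
    (g' : Fin (p' + 1) → Fin (p'' + 1)) :
    hatFun (fun i => g' (g i)) = fun i => hatFun g' (hatFun g i) := by
  funext i
  by_cases h1 : i.1 = 0
  · rw [show i = 0 from Fin.ext (by simp [h1]), hatFun_zero, hatFun_zero, hatFun_zero]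
  · by_cases h2 : i.1 = p + 2
    · rw [show i = Fin.last (p + 2) from Fin.ext (by simp [h2]), hatFun_last, hatFun_last,
        hatFun_last]
    · have hlt : i.1 - 1 < p + 1 := by have := i.isLt; omega
      rw [hatFun_mid (fun i => g' (g i)) i h1 h2 ⟨i.1 - 1, hlt⟩ rfl,
        hatFun_mid g i h1 h2 ⟨i.1 - 1, hlt⟩ rfl,
        hatFun_mid g' ((g ⟨i.1 - 1, hlt⟩).succ.castSucc)
          (by simp) (by simp only [Fin.coe_castSucc, Fin.val_succ]
                        have := (g ⟨i.1 - 1, hlt⟩).isLt; omega)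
          (g ⟨i.1 - 1, hlt⟩) (by simp)]

/-- The functor `J : SimplexCategory ⥤ E`, sending `[p]` to `p + 2` and a monotone map
`g : Fin (p+1) → Fin (p'+1)` to its extension `ĝ : Fin (p+3) → Fin (p'+3)` obtained by
adjoining a new minimum and a new maximum. -/
def JJ : SimplexCategory ⥤ EE where
  obj x := ⟨x.len + 2, by omega⟩
  map {x y} f := ⟨hatFun f.toOrderHom, hatFun_mono f.toOrderHom.monotone,
    hatFun_zero _, hatFun_last _⟩
  map_id x := Subtype.ext (hatFun_id x.len)
  map_comp {x y z} f g := Subtype.ext (hatFun_comp f.toOrderHom g.toOrderHom)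

/-- The functor `J : SimplexCategory ⥤ E` is initial: for every object `σ`
of `E`, the comma category `J ↓ σ` is connected (has contractible classifying space);
equivalently, restriction along `J` preserves limits. -/
theorem stmt_14 : JJ.Initial := by
  constructor
  intro σ
  let q : ℕ := σ.1
  have hq : 1 ≤ q := σ.2
  -- The "canonical" object: `[q]` equipped with the clamping map.
  let hT : Fin (q + 2 + 1) → Fin (q + 1) := fun i => ⟨min (i.1 - 1) q, by omega⟩
  have hTmono : Monotone hT := fun i j hij => by
    have : i.1 ≤ j.1 := hij
    simp only [hT, Fin.mk_le_mk]
    omega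
  let T : CostructuredArrow JJ σ :=
    CostructuredArrow.mk (Y := SimplexCategory.mk q)
      (⟨hT, hTmono, Fin.ext (show min (0 - 1) q = 0 by omega),
        Fin.ext (show min (q + 2 - 1) q = q by omega)⟩ :
        JJ.obj (SimplexCategory.mk q) ⟶ σ)
  have key : ∀ X : CostructuredArrow JJ σ, Nonempty (X ⟶ T) := by
    intro X
    set p := X.left.len with hp
    let g : Fin (p + 1) → Fin (q + 1) := fun i =>
      X.hom.1 (show Fin (p + 2 + 1) from ⟨i.1 + 1, by have := i.isLt; omega⟩)
    have gmono : Monotone g := fun i j hij =>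
      X.hom.2.1 (Fin.mk_le_mk.mpr (by have : i.1 ≤ j.1 := hij; omega))
    refine ⟨CostructuredArrow.homMk (SimplexCategory.Hom.mk ⟨g, gmono⟩) ?_⟩
    apply Subtype.ext
    funext i0
    let i : Fin (p + 2 + 1) := i0
    show hT (hatFun g i) = X.hom.1 i
    by_cases h0 : i.1 = 0
    · have hi0 : i = 0 := Fin.ext (by simpa using h0)
      rw [hi0, hatFun_zero]
      have h1 : hT 0 = 0 := Fin.ext (show min (0 - 1) q = 0 by omega)
      rw [h1]
      exact (X.hom.2.2.1 : X.hom.1 (0 : Fin (p + 2 + 1)) = 0).symm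
    · by_cases hl : i.1 = p + 2
      · have hi0 : i = Fin.last (p + 2) := Fin.ext (by simpa using hl)
        rw [hi0, hatFun_last]
        have h1 : hT (Fin.last (q + 2)) = Fin.last q :=
          Fin.ext (show min (q + 2 - 1) q = q by omega)
        rw [h1]
        exact (X.hom.2.2.2 : X.hom.1 (Fin.last (p + 2)) = Fin.last q).symm
      · have hi3 : i.1 < p + 3 := i.isLt
        have hlt : i.1 - 1 < p + 1 := by omega
        rw [hatFun_mid g i h0 hl ⟨i.1 - 1, hlt⟩ rfl]
        have hgc := (g ⟨i.1 - 1, hlt⟩).isLt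
        have h1 : hT (g ⟨i.1 - 1, hlt⟩).succ.castSucc = g ⟨i.1 - 1, hlt⟩ :=
          Fin.ext (by simp only [hT, Fin.coe_castSucc, Fin.val_succ]; omega)
        rw [h1]
        show X.hom.1 (⟨i.1 - 1 + 1, by omega⟩ : Fin (p + 2 + 1)) = X.hom.1 i
        exact congrArg X.hom.1 (Fin.ext (show i.1 - 1 + 1 = i.1 by omega))
  have : Nonempty (CostructuredArrow JJ σ) := ⟨T⟩
  apply zigzag_isConnected
  intro j₁ j₂
  exact Relation.ReflTransGen.trans
    (Relation.ReflTransGen.single (Or.inl (key j₁)))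
    (Relation.ReflTransGen.single (Or.inr (key j₂)))
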